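/- Let φ : (a,b) → [0,∞) be a convex function, where −∞ ≤ a < b ≤ +∞, and let f, g ∈ ℓᵖ(I) with ranges contained in (a,b). If f ≺ g (i.e., f = Dg for some doubly stochastic operator D on ℓᵖ(I)), then ∑_{i∈I} φ(f(i)) ≤ ∑_{i∈I} φ(g(i)). -/

import Mathlib

open scoped ENNReal

/-- The standard basis element `e i` of `ℓᵖ(I)`. -/
noncomputable def stdb (p : ℝ≥0∞) {I : Type*} (i : I) : lp (fun _ : I => ℝ) p :=
  letI := Classical.decEq I
  lp.single p i 1

/-- A bounded linear operator `A : ℓᵖ(J) → ℓᵖ(I)` is positive if `A f ≥ 0` whenever `f ≥ 0`. -/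
def IsPositiveOp {I J : Type*} {p : ℝ≥0∞} [Fact (1 ≤ p)]
    (A : lp (fun _ : J => ℝ) p →L[ℝ] lp (fun _ : I => ℝ) p) : Prop :=
  ∀ f : lp (fun _ : J => ℝ) p, (∀ j, 0 ≤ f j) → ∀ i, 0 ≤ A f i

/-- Row stochastic: positive and each row sum `∑_j ⟨A e_j, e_i⟩` equals 1. -/
def IsRowStochastic {I J : Type*} {p : ℝ≥0∞} [Fact (1 ≤ p)]
    (A : lp (fun _ : J => ℝ) p →L[ℝ] lp (fun _ : I => ℝ) p) : Prop :=
  IsPositiveOp A ∧ ∀ i : I, HasSum (fun j : J => A (stdb p j) i) 1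

/-- Column stochastic: positive and each column sum `∑_i ⟨A e_j, e_i⟩` equals 1. -/
def IsColumnStochastic {I J : Type*} {p : ℝ≥0∞} [Fact (1 ≤ p)]
    (A : lp (fun _ : J => ℝ) p →L[ℝ] lp (fun _ : I => ℝ) p) : Prop :=
  IsPositiveOp A ∧ ∀ j : J, HasSum (fun i : I => A (stdb p j) i) 1

/-- Doubly stochastic: both row and column stochastic. -/
def IsDoublyStochastic {I J : Type*} {p : ℝ≥0∞} [Fact (1 ≤ p)]
    (A : lp (fun _ : J => ℝ) p →L[ℝ] lp (fun _ : I => ℝ) p) : Prop :=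
  IsRowStochastic A ∧ IsColumnStochastic A

/-- `f ≺ g` : `f` is majorized by `g`, i.e. `f = D g` for some doubly stochastic `D`. -/
def Majorized {I : Type*} {p : ℝ≥0∞} [Fact (1 ≤ p)]
    (f g : lp (fun _ : I => ℝ) p) : Prop :=
  ∃ D : lp (fun _ : I => ℝ) p →L[ℝ] lp (fun _ : I => ℝ) p,
    IsDoublyStochastic D ∧ f = D g

/-- `T` preserves majorization if `f ≺ g` implies `T f ≺ T g`. -/
def PreservesMajorization {I : Type*} {p : ℝ≥0∞} [Fact (1 ≤ p)]
    (T : lp (fun _ : I => ℝ) p →L[ℝ] lp (fun _ : I => ℝ) p) : Prop :=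
  ∀ f g : lp (fun _ : I => ℝ) p, Majorized f g → Majorized (T f) (T g)


/-- Evaluation at a coordinate as a continuous linear map on `ℓᵖ`. -/
noncomputable def evCLM (p : ℝ≥0∞) [Fact (1 ≤ p)] {I : Type*} (i : I) :
    lp (fun _ : I => ℝ) p →L[ℝ] ℝ :=
  LinearMap.mkContinuous
    { toFun := fun f => f i
      map_add' := fun f g => by simp only [lp.coeFn_add, Pi.add_apply]
      map_smul' := fun c f => by simp only [lp.coeFn_smul, Pi.smul_apply, smul_eq_mul, RingHom.id_apply] }
    1 (fun f => by
      have hp0 : p ≠ 0 := (lt_of_lt_of_le zero_lt_one Fact.out).ne'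
      have := lp.norm_apply_le_norm hp0 f i
      simp only [one_mul]
      exact this)

@[simp] lemma evCLM_apply (p : ℝ≥0∞) [Fact (1 ≤ p)] {I : Type*} (i : I)
    (f : lp (fun _ : I => ℝ) p) : evCLM p i f = f i := rfl

/-- Supporting line for a convex function on an open subset of ℝ. -/
lemma exists_support {S : Set ℝ} (hS : IsOpen S) {φ : ℝ → ℝ} (hconv : ConvexOn ℝ S φ)
    {y : ℝ} (hy : y ∈ S) : ∃ c : ℝ, ∀ x ∈ S, φ y + c * (x - y) ≤ φ x := by
  obtain ⟨ε, hε, hball⟩ := Metric.isOpen_iff.1 hS y hy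
  have hu : y - ε/2 ∈ S := hball (by rw [Metric.mem_ball, Real.dist_eq, abs_lt]; constructor <;> linarith)
  have hv : y + ε/2 ∈ S := hball (by rw [Metric.mem_ball, Real.dist_eq, abs_lt]; constructor <;> linarith)
  set T : Set ℝ := (fun z => (φ z - φ y) / (z - y)) '' {z | z ∈ S ∧ y < z} with hT
  have hTne : T.Nonempty := ⟨(φ (y + ε/2) - φ y) / ((y + ε/2) - y), ⟨y + ε/2, ⟨hv, by linarith⟩, rfl⟩⟩
  have hbdd : BddBelow T := by
    refine ⟨(φ y - φ (y - ε/2)) / (y - (y - ε/2)), ?_⟩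
    rintro t ⟨z, ⟨hz, hyz⟩, rfl⟩
    exact hconv.slope_mono_adjacent hu hz (by linarith) hyz
  refine ⟨sInf T, fun x hx => ?_⟩
  rcases lt_trichotomy x y with h | h | h
  · have hle : (φ y - φ x) / (y - x) ≤ sInf T := by
      refine le_csInf hTne ?_
      rintro t ⟨z, ⟨hz, hyz⟩, rfl⟩
      exact hconv.slope_mono_adjacent hx hz h hyz
    have hxy : x - y < 0 := by linarith
    nlinarith [mul_le_mul_of_nonpos_right hle hxy.le,
      div_mul_cancel₀ (φ y - φ x) (show y - x ≠ 0 by linarith)]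
  · simp [h]
  · have hle : sInf T ≤ (φ x - φ y) / (x - y) := csInf_le hbdd ⟨x, ⟨hx, h⟩, rfl⟩
    have hxy : (0:ℝ) < x - y := by linarith
    nlinarith [mul_le_mul_of_nonneg_right hle hxy.le,
      div_mul_cancel₀ (φ x - φ y) (show x - y ≠ 0 by linarith)]

/-- Countable Jensen inequality via the supporting line. -/
lemma jensen_tsum {J : Type*} {S : Set ℝ} (hS : IsOpen S) {φ : ℝ → ℝ}
    (hconv : ConvexOn ℝ S φ) (hφ0 : ∀ x ∈ S, 0 ≤ φ x)
    (w x : J → ℝ) (hw : ∀ j, 0 ≤ w j) (hw1 : HasSum w 1)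
    (hx : ∀ j, x j ∈ S) {y : ℝ} (hy : y ∈ S)
    (hsum : HasSum (fun j => w j * x j) y) :
    ENNReal.ofReal (φ y) ≤ ∑' j, ENNReal.ofReal (w j * φ (x j)) := by
  obtain ⟨c, hc⟩ := exists_support hS hconv hy
  set L : J → ℝ := fun j => (φ y - c * y) * w j + c * (w j * x j) with hL
  have hLsum : HasSum L (φ y) := by
    have := (hw1.mul_left (φ y - c * y)).add (hsum.mul_left c)
    simpa [hL, mul_one] using (by exact this : HasSum L ((φ y - c*y) * 1 + c * y))
  have hLle : ∀ j, L j ≤ w j * φ (x j) := by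
    intro j
    have := mul_le_mul_of_nonneg_left (hc (x j) (hx j)) (hw j)
    calc L j = w j * (φ y + c * (x j - y)) := by ring
    _ ≤ w j * φ (x j) := this
  by_cases htop : ∑' j, ENNReal.ofReal (w j * φ (x j)) = ∞
  · simp [htop]
  · have hsummable : Summable (fun j => w j * φ (x j)) := by
      have := ENNReal.summable_toReal htop
      have heq : ∀ j, (ENNReal.ofReal (w j * φ (x j))).toReal = w j * φ (x j) := fun j =>
        ENNReal.toReal_ofReal (mul_nonneg (hw j) (hφ0 _ (hx j)))
      simpa [heq] using this
    have : φ y ≤ ∑' j, w j * φ (x j) := by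
      rw [← hLsum.tsum_eq]
      exact Summable.tsum_le_tsum hLle hLsum.summable hsummable
    calc ENNReal.ofReal (φ y) ≤ ENNReal.ofReal (∑' j, w j * φ (x j)) := ENNReal.ofReal_le_ofReal this
    _ = ∑' j, ENNReal.ofReal (w j * φ (x j)) :=
        ENNReal.ofReal_tsum_of_nonneg (fun j => mul_nonneg (hw j) (hφ0 _ (hx j))) hsummable

lemma stdb_apply_self (p : ℝ≥0∞) {I : Type*} (i : I) :
    (stdb p i : lp (fun _ : I => ℝ) p) i = 1 := by
  letI := Classical.decEq I
  unfold stdb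
  exact lp.single_apply_self p i 1

lemma stdb_apply_ne (p : ℝ≥0∞) {I : Type*} (i : I) {k : I} (h : k ≠ i) :
    (stdb p i : lp (fun _ : I => ℝ) p) k = 0 := by
  letI := Classical.decEq I
  unfold stdb
  exact lp.single_apply_ne p i 1 h

lemma single_eq_smul_stdb (p : ℝ≥0∞) {I : Type*} [DecidableEq I] (j : I) (c : ℝ) :
    lp.single p j c = c • stdb p j := by
  refine lp.ext (funext fun k => ?_)
  rcases eq_or_ne k j with rfl | h
  · rw [lp.coeFn_smul, Pi.smul_apply, lp.single_apply_self, stdb_apply_self]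
    simp
  · rw [lp.coeFn_smul, Pi.smul_apply, lp.single_apply_ne p j _ h, stdb_apply_ne p j h]
    simp

theorem stmt9 {I : Type*} [Nonempty I] (p : ℝ≥0∞) [Fact (1 ≤ p)] (hp : p ≠ ∞)
    (a b : EReal) (hab : a < b) (φ : ℝ → ℝ)
    (hconv : ConvexOn ℝ {x : ℝ | a < (x : EReal) ∧ (x : EReal) < b} φ)
    (hφ : ∀ x : ℝ, a < (x : EReal) → (x : EReal) < b → 0 ≤ φ x)
    (f g : lp (fun _ : I => ℝ) p)
    (hf : ∀ i, a < (f i : EReal) ∧ (f i : EReal) < b)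
    (hg : ∀ i, a < (g i : EReal) ∧ (g i : EReal) < b)
    (hfg : Majorized f g) :
    ∑' i : I, ENNReal.ofReal (φ (f i)) ≤ ∑' i : I, ENNReal.ofReal (φ (g i)) := by
  classical
  obtain ⟨D, ⟨⟨hpos, hrow⟩, ⟨-, hcol⟩⟩, hfD⟩ := hfg
  set S : Set ℝ := {x : ℝ | a < (x : EReal) ∧ (x : EReal) < b} with hSdef
  have hSopen : IsOpen S := by
    have : S = ((↑) : ℝ → EReal) ⁻¹' (Set.Ioi a ∩ Set.Iio b) := rfl
    rw [this]
    exact ((isOpen_Ioi.inter isOpen_Iio)).preimage continuous_coe_real_ereal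
  set d : I → I → ℝ := fun i j => D (stdb p j) i with hd
  have hdnn : ∀ i j, 0 ≤ d i j := by
    intro i j
    refine hpos _ (fun k => ?_) i
    rcases eq_or_ne k j with rfl | h
    · rw [stdb_apply_self]; norm_num
    · rw [stdb_apply_ne p j h]
  have key : ∀ i, HasSum (fun j => d i j * g j) (f i) := by
    intro i
    have h1 := (lp.hasSum_single hp g).mapL ((evCLM p i).comp D)
    have h2 : (fun j => ((evCLM p i).comp D) (lp.single p j (g j))) = fun j => d i j * g j := by
      funext j
      rw [single_eq_smul_stdb]
      simp [hd, mul_comm]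
    rw [h2] at h1
    simpa [hfD] using h1
  have main : ∀ i, ENNReal.ofReal (φ (f i)) ≤ ∑' j, ENNReal.ofReal (d i j * φ (g j)) := by
    intro i
    exact jensen_tsum hSopen hconv (fun x hx => hφ x hx.1 hx.2) (d i) (fun j => g j)
      (hdnn i) (hrow i) (fun j => hg j) (hf i) (key i)
  calc ∑' i, ENNReal.ofReal (φ (f i))
      ≤ ∑' i, ∑' j, ENNReal.ofReal (d i j * φ (g j)) := ENNReal.tsum_le_tsum main
    _ = ∑' j, ∑' i, ENNReal.ofReal (d i j * φ (g j)) := ENNReal.tsum_comm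
    _ = ∑' j, ENNReal.ofReal (φ (g j)) := by
        refine tsum_congr fun j => ?_
        have h1 : ∀ i : I, ENNReal.ofReal (d i j * φ (g j))
            = ENNReal.ofReal (d i j) * ENNReal.ofReal (φ (g j)) :=
          fun i => ENNReal.ofReal_mul (hdnn i j)
        simp_rw [h1]
        rw [ENNReal.tsum_mul_right]
        have h2 : ∑' i : I, ENNReal.ofReal (d i j) = 1 := by
          rw [← ENNReal.ofReal_tsum_of_nonneg (fun i => hdnn i j) (hcol j).summable,
            (hcol j).tsum_eq]
          simp
        rw [h2, one_mul]
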